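/- arXiv:2403.18020 — 2 statements merged into one kernel-verified Lean document; each statement's English description precedes it below -/
import Mathlib

section
/- Let J be a finite index type, let n : J → Type be finite types, let p : J → ℝ be a probability vector (p j ≥ 0 for all j and Σ_j p j = 1), and for each j let ρ_j be a density matrix indexed by n j. Let σ = Matrix.blockDiagonal' (fun j => p j • ρ_j), a matrix indexed by the sigma type Σ j, n j. Then σ is a density matrix and its spectral von Neumann entropy satisfies S(σ) = Σ_j negMulLog(p j) + Σ_j p j * S(ρ_j). (This is the entropy chain rule for orthogonally supported mixtures underlying the paper's Theorem 2.) -/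
open Matrix
open scoped ComplexOrder

/-- The spectral von Neumann entropy of a Hermitian matrix: the sum of
`negMulLog` over its eigenvalues counted with multiplicity. -/
noncomputable def vonNeumannEntropy {n : Type*} [Fintype n] [DecidableEq n]
    {ρ : Matrix n n ℂ} (hρ : ρ.IsHermitian) : ℝ :=
  ∑ i, Real.negMulLog (hρ.eigenvalues i)


open Matrix Polynomial
open scoped ComplexOrder

section Aux

variable {m : Type*} [Fintype m] [DecidableEq m]

lemma charmatrix_eq' (A : Matrix m m ℂ) :
    charmatrix A = Matrix.diagonal (fun _ => (X : ℂ[X])) - A.map C := by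
  ext i j
  simp [charmatrix_apply, Matrix.map_apply]

lemma charpoly_diagonalC (d : m → ℂ) :
    (Matrix.diagonal d).charpoly = ∏ i, ((X : ℂ[X]) - C (d i)) := by
  have h : charmatrix (Matrix.diagonal d)
      = Matrix.diagonal (fun i => (X : ℂ[X]) - C (d i)) := by
    ext i j
    by_cases h : i = j
    · subst h; simp [charmatrix_apply]
    · simp [charmatrix_apply, Matrix.diagonal_apply_ne _ h]
  rw [Matrix.charpoly, h, Matrix.det_diagonal]

lemma charpoly_conj_unitary (U : Matrix.unitaryGroup m ℂ) (A : Matrix m m ℂ) :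
    ((U : Matrix m m ℂ) * A * star (U : Matrix m m ℂ)).charpoly = A.charpoly := by
  set U' : Matrix m m ℂ := (U : Matrix m m ℂ)
  have hU : U' * star U' = 1 := Matrix.mem_unitaryGroup_iff.mp U.2
  have hdiag : ∀ (M : Matrix m m ℂ[X]),
      M * Matrix.diagonal (fun _ => (X : ℂ[X])) = Matrix.diagonal (fun _ => (X : ℂ[X])) * M := by
    intro M; ext i j
    simp [Matrix.mul_diagonal, Matrix.diagonal_mul, mul_comm]
  have key : charmatrix (U' * A * star U')
      = U'.map C * charmatrix A * (star U').map C := by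
    rw [charmatrix_eq', charmatrix_eq', Matrix.mul_sub, Matrix.sub_mul]
    congr 1
    · rw [hdiag (U'.map C), Matrix.mul_assoc, ← Matrix.map_mul (f := (C : ℂ →+* ℂ[X])), hU]
      simp
    · rw [← Matrix.map_mul (f := (C : ℂ →+* ℂ[X])), ← Matrix.map_mul (f := (C : ℂ →+* ℂ[X]))]
  have hU' : star U' * U' = 1 := Matrix.mem_unitaryGroup_iff'.mp U.2
  rw [Matrix.charpoly, key, Matrix.det_mul, Matrix.det_mul, mul_comm, ← mul_assoc,
    ← Matrix.det_mul, ← Matrix.map_mul (f := (C : ℂ →+* ℂ[X])), hU']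
  simp [Matrix.charpoly]

lemma charpoly_smul_hermitian (c : ℝ) {A : Matrix m m ℂ} (hA : A.IsHermitian) :
    ((c : ℂ) • A).charpoly = ∏ i, ((X : ℂ[X]) - C (((c * hA.eigenvalues i : ℝ) : ℂ))) := by
  have hspec := hA.spectral_theorem
  have h2 : Matrix.diagonal (fun i => ((c * hA.eigenvalues i : ℝ) : ℂ))
      = (c : ℂ) • Matrix.diagonal ((fun r : ℝ => (r : ℂ)) ∘ hA.eigenvalues) := by
    ext i j
    rcases eq_or_ne i j with rfl | h
    · simp [Function.comp, Matrix.diagonal, smul_eq_mul]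
    · simp [Matrix.diagonal_apply_ne _ h]
  have h1 : (c : ℂ) • A
      = (hA.eigenvectorUnitary : Matrix m m ℂ)
        * Matrix.diagonal (fun i => ((c * hA.eigenvalues i : ℝ) : ℂ))
        * star (hA.eigenvectorUnitary : Matrix m m ℂ) := by
    rw [h2, Matrix.mul_smul, Matrix.smul_mul]
    conv_lhs => rw [hspec]
    rfl
  rw [h1, charpoly_conj_unitary, charpoly_diagonalC]

lemma roots_prod_X_sub_C' (a : m → ℂ) :
    (∏ i, ((X : ℂ[X]) - C (a i))).roots = Finset.univ.val.map a := by
  have h := roots_multiset_prod_X_sub_C (Finset.univ.val.map a)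
  rw [Multiset.map_map] at h
  rw [Finset.prod_eq_multiset_prod]
  exact h

lemma sum_eigenvalues_eq_trace {A : Matrix m m ℂ} (hA : A.IsHermitian) :
    (∑ i, (hA.eigenvalues i : ℂ)) = A.trace := by
  conv_rhs => rw [hA.spectral_theorem]
  rw [Unitary.conjStarAlgAut_apply, Matrix.trace_mul_cycle]
  rw [Matrix.mem_unitaryGroup_iff'.mp hA.eigenvectorUnitary.2]
  simp [Matrix.trace_diagonal]

end Aux

section Block

variable {J : Type*} [Fintype J] [DecidableEq J]
  {n : J → Type*} [∀ j, Fintype (n j)] [∀ j, DecidableEq (n j)]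

lemma det_blockDiagonal'C {R : Type*} [CommRing R] (M : ∀ j, Matrix (n j) (n j) R) :
    (Matrix.blockDiagonal' M).det = ∏ j, (M j).det := by
  letI : LinearOrder J := LinearOrder.lift' (Fintype.equivFin J) (Fintype.equivFin J).injective
  rw [(Matrix.blockTriangular_blockDiagonal' M).det_fintype]
  refine Finset.prod_congr rfl fun j _ => ?_
  let e : n j ≃ {x : Σ i, n i // x.1 = j} :=
    { toFun := fun i => ⟨⟨j, i⟩, rfl⟩
      invFun := fun x => cast (congrArg n x.2) x.1.2
      left_inv := fun i => rfl
      right_inv := by rintro ⟨⟨a, i⟩, rfl⟩; rfl }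
  have h2 : ((Matrix.blockDiagonal' M).toSquareBlock Sigma.fst j).submatrix e e = M j := by
    ext i k
    have hcoe : ∀ i : n j, ((e i : {x : Σ i, n i // x.1 = j}) : Σ i, n i) = ⟨j, i⟩ :=
      fun _ => rfl
    simp [Matrix.toSquareBlock_def, hcoe, Matrix.blockDiagonal'_apply_eq]
  rw [← h2, Matrix.det_submatrix_equiv_self]

lemma charpoly_blockDiagonal'C (M : ∀ j, Matrix (n j) (n j) ℂ) :
    (Matrix.blockDiagonal' M).charpoly = ∏ j, (M j).charpoly := by
  have key : charmatrix (Matrix.blockDiagonal' M)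
      = Matrix.blockDiagonal' (fun j => charmatrix (M j)) := by
    have h1 : Matrix.diagonal (fun _ : Σ j, n j => (X : ℂ[X]))
        = Matrix.blockDiagonal' (fun j => Matrix.diagonal (fun _ : n j => (X : ℂ[X]))) :=
      (Matrix.blockDiagonal'_diagonal (fun _ _ => (X : ℂ[X]))).symm
    rw [charmatrix_eq', h1, Matrix.blockDiagonal'_map _ _ (map_zero C),
      ← Matrix.blockDiagonal'_sub]
    congr 1
  rw [Matrix.charpoly, key, det_blockDiagonal'C]
  rfl

lemma blockDiagonal'_mulVec (M : ∀ j, Matrix (n j) (n j) ℂ) (x : (Σ j, n j) → ℂ) (j : J)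
    (i : n j) :
    (Matrix.blockDiagonal' M *ᵥ x) ⟨j, i⟩ = (M j *ᵥ fun l => x ⟨j, l⟩) i := by
  simp only [Matrix.mulVec, dotProduct]
  rw [← Finset.univ_sigma_univ, Finset.sum_sigma]
  rw [Finset.sum_eq_single j]
  · simp [Matrix.blockDiagonal'_apply_eq]
  · intro k _ hk
    apply Finset.sum_eq_zero
    intro l _
    rw [Matrix.blockDiagonal'_apply_ne _ _ _ (Ne.symm hk), zero_mul]
  · simp

lemma posSemidef_blockDiagonal' {M : ∀ j, Matrix (n j) (n j) ℂ}
    (hM : ∀ j, (M j).PosSemidef) : (Matrix.blockDiagonal' M).PosSemidef := by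
  rw [Matrix.posSemidef_iff_dotProduct_mulVec]
  constructor
  · rw [Matrix.IsHermitian, Matrix.blockDiagonal'_conjTranspose]
    have h : (fun k => (M k)ᴴ) = M := funext fun k => (hM k).1
    rw [h]
  · intro x
    have h : dotProduct (star x) (Matrix.blockDiagonal' M *ᵥ x)
        = ∑ j, dotProduct (star fun l => x ⟨j, l⟩) (M j *ᵥ fun l => x ⟨j, l⟩) := by
      simp only [dotProduct]
      rw [← Finset.univ_sigma_univ, Finset.sum_sigma]
      refine Finset.sum_congr rfl fun j _ => Finset.sum_congr rfl fun i _ => ?_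
      rw [blockDiagonal'_mulVec]
      rfl
    rw [h]
    exact Finset.sum_nonneg fun j _ => (hM j).dotProduct_mulVec_nonneg _

end Block

section Entropy

variable {m : Type*} [Fintype m] [DecidableEq m]

lemma charpoly_of_hermitian {A : Matrix m m ℂ} (hA : A.IsHermitian) :
    A.charpoly = ∏ i, ((X : ℂ[X]) - C ((hA.eigenvalues i : ℂ))) := by
  have h := charpoly_smul_hermitian 1 hA
  simpa using h

lemma vNE_eq_roots {A : Matrix m m ℂ} (hA : A.IsHermitian) :
    vonNeumannEntropy hA = (A.charpoly.roots.map (fun z => Real.negMulLog z.re)).sum := by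
  rw [charpoly_of_hermitian hA, roots_prod_X_sub_C', Multiset.map_map,
    vonNeumannEntropy, Finset.sum_eq_multiset_sum]
  apply congrArg
  apply Multiset.map_congr rfl
  intro i _
  simp

end Entropy

/-- Entropy chain rule for an orthogonally supported mixture: if `p` is a
probability vector and each `ρ j` is a density matrix, then the block-diagonal
matrix `σ = blockDiagonal' (fun j => p j • ρ j)` is a density matrix with
`S(σ) = Σ_j negMulLog (p j) + Σ_j p j * S(ρ j)`. -/
theorem entropy_blockDiagonal_mixture {J : Type*} [Fintype J] [DecidableEq J]
    {n : J → Type*} [∀ j, Fintype (n j)] [∀ j, DecidableEq (n j)]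
    (p : J → ℝ) (hp0 : ∀ j, 0 ≤ p j) (hp1 : ∑ j, p j = 1)
    (ρ : ∀ j, Matrix (n j) (n j) ℂ)
    (hρ : ∀ j, (ρ j).PosSemidef) (htr : ∀ j, (ρ j).trace = 1) :
    (Matrix.blockDiagonal' (fun j => ((p j : ℝ) : ℂ) • ρ j)).PosSemidef ∧
    (Matrix.blockDiagonal' (fun j => ((p j : ℝ) : ℂ) • ρ j)).trace = 1 ∧
    ∀ hσ : (Matrix.blockDiagonal' (fun j => ((p j : ℝ) : ℂ) • ρ j)).IsHermitian,
      vonNeumannEntropy hσ =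
        ∑ j, Real.negMulLog (p j) + ∑ j, p j * vonNeumannEntropy (hρ j).isHermitian := by
  have hpsd : ∀ j, (((p j : ℝ) : ℂ) • ρ j).PosSemidef := by
    intro j
    rw [Matrix.posSemidef_iff_dotProduct_mulVec]
    refine ⟨?_, ?_⟩
    · rw [Matrix.IsHermitian, Matrix.conjTranspose_smul, (hρ j).1]
      congr 1
      simp [Complex.star_def, Complex.conj_ofReal]
    · intro x
      rw [Matrix.smul_mulVec, dotProduct_smul, smul_eq_mul]
      exact mul_nonneg (by exact_mod_cast hp0 j) ((hρ j).dotProduct_mulVec_nonneg x)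
  refine ⟨posSemidef_blockDiagonal' hpsd, ?_, ?_⟩
  · rw [Matrix.trace_blockDiagonal']
    simp only [Matrix.trace_smul, htr, smul_eq_mul, mul_one]
    exact_mod_cast hp1
  · intro hσ
    have hprodne : (∏ j, (((p j : ℝ) : ℂ) • ρ j).charpoly) ≠ 0 :=
      (monic_prod_of_monic _ _ fun j _ => Matrix.charpoly_monic _).ne_zero
    have hsum_eig : ∀ j, (∑ i, (hρ j).isHermitian.eigenvalues i) = 1 := by
      intro j
      have h := sum_eigenvalues_eq_trace (hρ j).isHermitian
      rw [htr j] at h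
      exact_mod_cast h
    rw [vNE_eq_roots hσ, charpoly_blockDiagonal'C, Polynomial.roots_prod _ _ hprodne,
      Multiset.map_bind, Multiset.sum_bind]
    have hterm : ∀ j : J,
        (((((p j : ℝ) : ℂ) • ρ j).charpoly.roots).map (fun z => Real.negMulLog z.re)).sum
          = Real.negMulLog (p j) + p j * vonNeumannEntropy (hρ j).isHermitian := by
      intro j
      rw [charpoly_smul_hermitian (p j) (hρ j).isHermitian, roots_prod_X_sub_C',
        Multiset.map_map, ← Finset.sum_eq_multiset_sum]
      have : ∀ i : n j,
          ((fun z : ℂ => Real.negMulLog z.re) ∘ fun i =>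
              ((p j * (hρ j).isHermitian.eigenvalues i : ℝ) : ℂ)) i
            = (hρ j).isHermitian.eigenvalues i * Real.negMulLog (p j)
              + p j * Real.negMulLog ((hρ j).isHermitian.eigenvalues i) := by
        intro i
        simp [Function.comp, Real.negMulLog_mul]
      rw [Finset.sum_congr rfl fun i _ => this i, Finset.sum_add_distrib,
        ← Finset.sum_mul, hsum_eig j, one_mul, ← Finset.mul_sum, vonNeumannEntropy]
    rw [show (Multiset.map (fun j =>
        (Multiset.map (fun z : ℂ => Real.negMulLog z.re)
          (((p j : ℝ) : ℂ) • ρ j).charpoly.roots).sum) Finset.univ.val).sum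
        = ∑ j, (Multiset.map (fun z : ℂ => Real.negMulLog z.re)
            (((p j : ℝ) : ℂ) • ρ j).charpoly.roots).sum from
      (Finset.sum_eq_multiset_sum _ _).symm]
    rw [Finset.sum_congr rfl fun j _ => hterm j, Finset.sum_add_distrib]
end

section
/- Let J be a finite index type, let p : J → ℝ be a probability vector (p j ≥ 0 for all j and Σ_j p j = 1), and let d : J → ℕ with d j ≥ 1 for all j. Let σ be the block-diagonal matrix Matrix.blockDiagonal' (fun j => ((p j / d j : ℝ) : ℂ) • (1 : Matrix (Fin (d j)) (Fin (d j)) ℂ)). Then σ is a density matrix and its spectral von Neumann entropy satisfies S(σ) = Σ_j negMulLog(p j) + Σ_j p j * Real.log (d j). (This is the paper's decomposition E(A|B) = E_p(A|B) + E_0(A|B) with E_p(A|B) = −Σ_j p_j ln p_j and E_0(A|B) = Σ_j p_j ln(2j+1), for the reduced density matrix ρ_A = Σ_j p_j ρ_j^A where each ρ_j^A is maximally mixed on a (2j+1)-dimensional recoupled subspace.) -/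
open Matrix
open scoped ComplexOrder

section aux

variable {n : Type*} [Fintype n] [DecidableEq n]

open Polynomial in
lemma charmatrix_diagonal' (v : n → ℂ) :
    charmatrix (Matrix.diagonal v) = Matrix.diagonal fun i => (X : ℂ[X]) - C (v i) := by
  ext i j
  rcases eq_or_ne i j with rfl | h
  · simp [charmatrix_apply_eq]
  · simp [charmatrix_apply_ne _ _ _ h, Matrix.diagonal_apply_ne _ h]

open Polynomial in
lemma charpoly_diagonal' (v : n → ℂ) :
    (Matrix.diagonal v).charpoly = ∏ i, ((X : ℂ[X]) - C (v i)) := by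
  rw [Matrix.charpoly, charmatrix_diagonal', Matrix.det_diagonal]

open Polynomial in
lemma charpoly_conj_aux (A V W : Matrix n n ℂ) (h1 : V * W = 1) :
    (V * A * W).charpoly = A.charpoly := by
  have h2 : W * V = 1 := mul_eq_one_comm.mp h1
  have key : charmatrix (V * A * W) =
      V.map C * charmatrix A * W.map C := by
    have hmap : ∀ (M N : Matrix n n ℂ), (M * N).map (C : ℂ →+* ℂ[X]) =
        M.map C * N.map C := fun M N => Matrix.map_mul
    unfold charmatrix
    simp only [RingHom.mapMatrix_apply]
    rw [Matrix.mul_sub, Matrix.sub_mul, ← hmap, ← hmap, Matrix.mul_assoc]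
    congr 1
    have hscal : ∀ M : Matrix n n ℂ,
        M.map (C : ℂ →+* ℂ[X]) * Matrix.scalar n (X : ℂ[X]) =
          Matrix.scalar n (X : ℂ[X]) * M.map C := fun M =>
      (Matrix.scalar_commute (X : ℂ[X]) (fun r => Commute.all _ _) (M.map C)).symm
    rw [Matrix.mul_assoc, ← Matrix.mul_assoc (V.map C), hscal, Matrix.mul_assoc, ← hmap, h1]
    simp
  have hdet : (V.map (C : ℂ →+* ℂ[X])).det * (W.map C).det = 1 := by
    rw [← Matrix.det_mul, ← Matrix.map_mul, h1]
    simp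
  rw [Matrix.charpoly, Matrix.charpoly, key, Matrix.det_mul, Matrix.det_mul]
  ring_nf
  rw [mul_comm (V.map C).det, mul_assoc, hdet, mul_one]

open Polynomial in
/-- The multiset of eigenvalues of a Hermitian matrix which happens to be real diagonal
is the multiset of diagonal entries. -/
lemma eigenvalues_multiset_eq (v : n → ℝ)
    (h : (Matrix.diagonal (fun i => (v i : ℂ))).IsHermitian) :
    (Finset.univ.val.map h.eigenvalues) = Finset.univ.val.map v := by
  set A := Matrix.diagonal (fun i => (v i : ℂ)) with hA
  have hspec := h.spectral_theorem
  have hU : ((h.eigenvectorUnitary : Matrix n n ℂ)) *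
      (star (h.eigenvectorUnitary : Matrix n n ℂ)) = 1 :=
    Matrix.mem_unitaryGroup_iff.mp h.eigenvectorUnitary.2
  have hcp : A.charpoly = (Matrix.diagonal (RCLike.ofReal ∘ h.eigenvalues)).charpoly := by
    conv_lhs => rw [hspec]
    exact charpoly_conj_aux _ _ _ hU
  have hcp2 : (∏ i, ((X : ℂ[X]) - C ((v i : ℂ)))) =
      ∏ i, ((X : ℂ[X]) - C ((h.eigenvalues i : ℂ))) := by
    rw [← charpoly_diagonal', hcp, charpoly_diagonal']
    rfl
  have hroots : (Finset.univ.val.map (fun i => ((v i : ℂ)))) =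
      (Finset.univ.val.map (fun i => ((h.eigenvalues i : ℂ)))) := by
    have e1 : (∏ i, ((X : ℂ[X]) - C ((v i : ℂ)))) =
        ((Finset.univ.val.map (fun i => ((v i : ℂ)))).map (fun a => (X : ℂ[X]) - C a)).prod := by
      rw [Multiset.map_map]; rfl
    have e2 : (∏ i, ((X : ℂ[X]) - C ((h.eigenvalues i : ℂ)))) =
        ((Finset.univ.val.map (fun i => ((h.eigenvalues i : ℂ)))).map
          (fun a => (X : ℂ[X]) - C a)).prod := by
      rw [Multiset.map_map]; rfl
    have := congrArg Polynomial.roots (e1 ▸ e2 ▸ hcp2)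
    rwa [Polynomial.roots_multiset_prod_X_sub_C, Polynomial.roots_multiset_prod_X_sub_C] at this
  have : (Finset.univ.val.map (fun i => ((v i : ℂ)))).map Complex.re =
      (Finset.univ.val.map (fun i => ((h.eigenvalues i : ℂ)))).map Complex.re := by
    rw [hroots]
  simpa [Multiset.map_map, Function.comp] using this.symm

end aux

/-- For a probability vector `p` and dimensions `d j ≥ 1`, the block-diagonal
matrix whose `j`-th block is the maximally mixed state `p j / d j • 1` on
`Fin (d j)` is a density matrix with von Neumann entropy
`Σ_j negMulLog (p j) + Σ_j p j * log (d j)`. -/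
theorem entropy_blockDiagonal_maximallyMixed {J : Type*} [Fintype J] [DecidableEq J]
    (p : J → ℝ) (hp0 : ∀ j, 0 ≤ p j) (hp1 : ∑ j, p j = 1)
    (d : J → ℕ) (hd : ∀ j, 1 ≤ d j) :
    (Matrix.blockDiagonal' (fun j => ((p j / d j : ℝ) : ℂ) •
        (1 : Matrix (Fin (d j)) (Fin (d j)) ℂ))).PosSemidef ∧
    (Matrix.blockDiagonal' (fun j => ((p j / d j : ℝ) : ℂ) •
        (1 : Matrix (Fin (d j)) (Fin (d j)) ℂ))).trace = 1 ∧
    ∀ hσ : (Matrix.blockDiagonal' (fun j => ((p j / d j : ℝ) : ℂ) •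
        (1 : Matrix (Fin (d j)) (Fin (d j)) ℂ))).IsHermitian,
      vonNeumannEntropy hσ =
        ∑ j, Real.negMulLog (p j) + ∑ j, p j * Real.log (d j) := by
  have hdpos : ∀ j, (0:ℝ) < d j := fun j => by
    exact_mod_cast Nat.lt_of_lt_of_le Nat.zero_lt_one (hd j)
  have hdiag : (Matrix.blockDiagonal' (fun j => ((p j / d j : ℝ) : ℂ) •
        (1 : Matrix (Fin (d j)) (Fin (d j)) ℂ)))
      = Matrix.diagonal (fun ik : Σ j, Fin (d j) => ((p ik.1 / d ik.1 : ℝ) : ℂ)) := by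
    have : ∀ j, ((p j / d j : ℝ) : ℂ) • (1 : Matrix (Fin (d j)) (Fin (d j)) ℂ)
        = Matrix.diagonal (fun _ : Fin (d j) => ((p j / d j : ℝ) : ℂ)) := by
      intro j; rw [Matrix.smul_one_eq_diagonal]
    simp_rw [this, Matrix.blockDiagonal'_diagonal]
  rw [hdiag]
  refine ⟨?_, ?_, ?_⟩
  · refine Matrix.posSemidef_diagonal_iff.mpr fun ik => ?_
    rw [Complex.zero_le_real]
    exact div_nonneg (hp0 _) (hdpos _).le
  · rw [Matrix.trace_diagonal, ← Finset.univ_sigma_univ, Finset.sum_sigma]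
    have : ∀ j : J, ∑ _k : Fin (d j), ((p j / d j : ℝ) : ℂ) = ((p j : ℂ)) := by
      intro j
      rw [Finset.sum_const, Finset.card_univ, Fintype.card_fin, nsmul_eq_mul]
      rw [← Complex.ofReal_natCast, ← Complex.ofReal_mul]
      congr 1
      rw [mul_comm]
      exact div_mul_cancel₀ _ (ne_of_gt (hdpos j))
    simp_rw [this]
    rw [← Complex.ofReal_sum, hp1, Complex.ofReal_one]
  · intro hσ
    have hmult := eigenvalues_multiset_eq (fun ik : Σ j, Fin (d j) => p ik.1 / d ik.1) hσ
    have hsum : vonNeumannEntropy hσ =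
        ∑ ik : Σ j, Fin (d j), Real.negMulLog (p ik.1 / d ik.1) := by
      unfold vonNeumannEntropy
      rw [Finset.sum_eq_multiset_sum, Finset.sum_eq_multiset_sum]
      calc (Finset.univ.val.map fun i => Real.negMulLog (hσ.eigenvalues i)).sum
          = ((Finset.univ.val.map hσ.eigenvalues).map Real.negMulLog).sum := by
            rw [Multiset.map_map]; rfl
        _ = ((Finset.univ.val.map
              (fun ik : Σ j, Fin (d j) => p ik.1 / d ik.1)).map Real.negMulLog).sum := by
            rw [hmult]
        _ = _ := by rw [Multiset.map_map]; rfl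
    rw [hsum, ← Finset.univ_sigma_univ, Finset.sum_sigma]
    have key : ∀ j : J, ∑ _k : Fin (d j), Real.negMulLog (p j / d j)
        = Real.negMulLog (p j) + p j * Real.log (d j) := by
      intro j
      rw [Finset.sum_const, Finset.card_univ, Fintype.card_fin, nsmul_eq_mul]
      rcases eq_or_lt_of_le (hp0 j) with h0 | hpos
      · rw [← h0]; simp
      · rw [Real.negMulLog, Real.negMulLog,
          Real.log_div (ne_of_gt hpos) (ne_of_gt (hdpos j))]
        field_simp
        linear_combination (Real.log (d j) - Real.log (p j)) *
          (mul_inv_cancel₀ (ne_of_gt (hdpos j)))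
    simp_rw [key]
    rw [Finset.sum_add_distrib]
end
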